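/- The following limit inferior bound holds: liminf_{λ → ∞} e^{-λ} · (log λ)^{-1} · ∑_{k=1}^∞ λ^k · log(k+1) / k! ≥ 1, where log denotes the natural logarithm. -/

import Mathlib

open Filter Real Topology

private lemma aux_summable {l : ℝ} (hl : 0 ≤ l) :
    Summable (fun k : ℕ => l ^ k * Real.log ((k : ℝ) + 1) / (Nat.factorial k : ℝ)) := by
  refine Summable.of_nonneg_of_le (fun k => ?_) (fun k => ?_)
    (Real.summable_pow_div_factorial (2 * l))
  · 
    have h1 : (0:ℝ) ≤ Real.log ((k : ℝ) + 1) := Real.log_nonneg (by linarith [Nat.cast_nonneg (α := ℝ) k])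
    positivity
  · have hfac : (0:ℝ) < (Nat.factorial k : ℝ) := by exact_mod_cast Nat.factorial_pos k
    have hlog : Real.log ((k : ℝ) + 1) ≤ (2:ℝ) ^ k := by
      have h1 : Real.log ((k : ℝ) + 1) ≤ ((k : ℝ) + 1) - 1 :=
        Real.log_le_sub_one_of_pos (by positivity)
      have h2 : (k : ℝ) ≤ (2:ℝ) ^ k := by
        exact_mod_cast (Nat.lt_two_pow_self (n := k)).le
      linarith
    have : l ^ k * Real.log ((k : ℝ) + 1) ≤ (2 * l) ^ k := by
      rw [mul_pow]
      have hlk : (0:ℝ) ≤ l ^ k := by positivity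
      calc l ^ k * Real.log ((k : ℝ) + 1) ≤ l ^ k * (2:ℝ) ^ k :=
            mul_le_mul_of_nonneg_left hlog hlk
        _ = (2:ℝ) ^ k * l ^ k := by ring
    exact (div_le_div_iff_of_pos_right hfac).mpr this

private lemma aux_mono {l : ℝ} (hl0 : 0 ≤ l) :
    ∀ m : ℕ, (m : ℝ) ≤ l → ∀ k : ℕ, k ≤ m →
      l ^ k / (Nat.factorial k : ℝ) ≤ l ^ m / (Nat.factorial m : ℝ) := by
  intro m
  induction m with
  | zero => intro _ k hk; interval_cases k; exact le_rfl
  | succ n ih =>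
    intro hm k hk
    rcases Nat.eq_or_lt_of_le hk with h | h
    · subst h; exact le_rfl
    · have hk' : k ≤ n := Nat.lt_succ_iff.mp h
      have hn : (n : ℝ) ≤ l := by push_cast at hm ⊢; linarith
      refine (ih hn k hk').trans ?_
      have hfac : (0:ℝ) < (Nat.factorial n : ℝ) := by exact_mod_cast Nat.factorial_pos n
      have hfacs : (0:ℝ) < (Nat.factorial (n+1) : ℝ) := by
        exact_mod_cast Nat.factorial_pos (n+1)
      rw [div_le_div_iff₀ hfac hfacs]
      have hfact : ((Nat.factorial (n+1)) : ℝ) = ((n:ℝ) + 1) * (Nat.factorial n : ℝ) := by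
        rw [Nat.factorial_succ]; push_cast; ring
      rw [hfact, pow_succ]
      have hln : (0:ℝ) ≤ l ^ n := by positivity
      push_cast at hm
      nlinarith [mul_nonneg (mul_nonneg (sub_nonneg.mpr hm) hln) hfac.le]

private lemma aux_summable_k {l : ℝ} (hl : 0 ≤ l) :
    Summable (fun k : ℕ => l ^ k * (k : ℝ) / (Nat.factorial k : ℝ)) := by
  refine Summable.of_nonneg_of_le (fun k => ?_) (fun k => ?_)
    (Real.summable_pow_div_factorial (2 * l))
  · have hfac : (0:ℝ) < (Nat.factorial k : ℝ) := by exact_mod_cast Nat.factorial_pos k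
    positivity
  · have hfac : (0:ℝ) < (Nat.factorial k : ℝ) := by exact_mod_cast Nat.factorial_pos k
    have h2 : (k : ℝ) ≤ (2:ℝ) ^ k := by exact_mod_cast (Nat.lt_two_pow_self (n := k)).le
    have : l ^ k * (k : ℝ) ≤ (2 * l) ^ k := by
      rw [mul_pow]
      have hlk : (0:ℝ) ≤ l ^ k := by positivity
      nlinarith
    exact (div_le_div_iff_of_pos_right hfac).mpr this

private lemma aux_U {l : ℝ} (hl : 0 ≤ l) :
    ∑' k : ℕ, l ^ k * (k : ℝ) / (Nat.factorial k : ℝ) = l * Real.exp l := by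
  have hsum := aux_summable_k hl
  rw [hsum.tsum_eq_zero_add]
  have h0 : l ^ 0 * ((0:ℕ) : ℝ) / (Nat.factorial 0 : ℝ) = 0 := by simp
  rw [h0, zero_add]
  have hterm : ∀ k : ℕ, l ^ (k + 1) * ((k + 1 : ℕ) : ℝ) / (Nat.factorial (k + 1) : ℝ)
      = l * (l ^ k / (Nat.factorial k : ℝ)) := by
    intro k
    have hfac : (0:ℝ) < (Nat.factorial k : ℝ) := by exact_mod_cast Nat.factorial_pos k
    have hfact : ((Nat.factorial (k+1)) : ℝ) = ((k:ℝ) + 1) * (Nat.factorial k : ℝ) := by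
      rw [Nat.factorial_succ]; push_cast; ring
    rw [hfact, pow_succ]
    push_cast
    field_simp
  rw [tsum_congr hterm, tsum_mul_left]
  rw [Real.exp_eq_exp_ℝ, NormedSpace.exp_eq_tsum_div]

theorem poisson_liminf_bound :
    1 ≤ Filter.liminf (fun l : ℝ =>
      Real.exp (-l) * (Real.log l)⁻¹ *
        ∑' k : ℕ, l ^ k * Real.log ((k : ℝ) + 1) / (Nat.factorial k : ℝ))
      Filter.atTop := by
  set u : ℝ → ℝ := fun l =>
      Real.exp (-l) * (Real.log l)⁻¹ *
        ∑' k : ℕ, l ^ k * Real.log ((k : ℝ) + 1) / (Nat.factorial k : ℝ) with hu_def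
  set c : ℝ := (1 - Real.log (5/2)) / 2 with hc_def
  have hc : 0 < c := by
    have h52 : Real.log (5/2) < 1 := by
      rw [Real.log_lt_iff_lt_exp (by norm_num)]
      have := Real.exp_one_gt_d9
      linarith
    simp only [hc_def]; linarith
  set g : ℝ → ℝ := fun l =>
      (1 - Real.log 2 / Real.log l) * (1 - l * Real.exp (-(c * l))) with hg_def
  -- Tendsto g atTop (𝓝 1)
  have h2 : Tendsto (fun l : ℝ => l * Real.exp (-(c * l))) atTop (𝓝 0) := by
    have hbase : Tendsto (fun y : ℝ => y ^ 1 * Real.exp (-y)) atTop (𝓝 0) :=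
      Real.tendsto_pow_mul_exp_neg_atTop_nhds_zero 1
    have hcl : Tendsto (fun l : ℝ => c * l) atTop atTop :=
      Tendsto.const_mul_atTop hc tendsto_id
    have hcomp : Tendsto (fun l : ℝ => (c * l) ^ 1 * Real.exp (-(c * l))) atTop (𝓝 0) :=
      hbase.comp hcl
    have := hcomp.const_mul c⁻¹
    rw [mul_zero] at this
    refine this.congr (fun l => ?_)
    rw [pow_one]
    field_simp
  have h1 : Tendsto (fun l : ℝ => Real.log 2 / Real.log l) atTop (𝓝 0) := by
    have : Tendsto (fun l : ℝ => (Real.log l)⁻¹) atTop (𝓝 0) :=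
      Real.tendsto_log_atTop.inv_tendsto_atTop
    have := this.const_mul (Real.log 2)
    rw [mul_zero] at this
    exact this.congr (fun l => by rw [div_eq_mul_inv])
  have hg : Tendsto g atTop (𝓝 1) := by
    have := ((tendsto_const_nhds.sub h1).mul (tendsto_const_nhds.sub h2) :
      Tendsto (fun l => ((1:ℝ) - Real.log 2 / Real.log l) * (1 - l * Real.exp (-(c * l))))
        atTop (𝓝 ((1 - 0) * (1 - 0))))
    norm_num at this
    exact this
  -- eventual inequality g ≤ u
  have hev : ∀ᶠ l in atTop, g l ≤ u l := by
    filter_upwards [eventually_ge_atTop (10:ℝ), h2.eventually_lt_const one_pos]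
      with l hl10 hle1
    have hl0 : (0:ℝ) < l := by linarith
    have hl1 : (1:ℝ) < l := by linarith
    have hlog : 0 < Real.log l := Real.log_pos hl1
    set m : ℕ := ⌊l / 2⌋₊ with hm_def
    have hm2 : (m : ℝ) ≤ l / 2 := Nat.floor_le (by linarith)
    have hm1 : l / 2 < (m : ℝ) + 1 := Nat.lt_floor_add_one _
    have hml : (m : ℝ) ≤ l := by linarith
    have hm52 : l ≤ (5/2) * (m : ℝ) := by linarith
    have hm0 : (0:ℝ) < (m : ℝ) := by linarith
    set t : ℕ → ℝ := fun k => l ^ k * Real.log ((k : ℝ) + 1) / (Nat.factorial k : ℝ)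
      with ht_def
    have hsum : Summable t := aux_summable hl0.le
    have hsexp : Summable (fun k : ℕ => l ^ k / (Nat.factorial k : ℝ)) :=
      Real.summable_pow_div_factorial l
    set P : ℝ := ∑ k ∈ Finset.range m, l ^ k / (Nat.factorial k : ℝ) with hP_def
    -- exp l = P + tail
    have hexp_tsum : Real.exp l = ∑' k : ℕ, l ^ k / (Nat.factorial k : ℝ) := by
      rw [Real.exp_eq_exp_ℝ, NormedSpace.exp_eq_tsum_div]
    have hsplit : P + ∑' k : ℕ, l ^ (k + m) / (Nat.factorial (k + m) : ℝ) = Real.exp l := by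
      rw [hexp_tsum]; exact Summable.sum_add_tsum_nat_add m hsexp
    have htail_exp : ∑' k : ℕ, l ^ (k + m) / (Nat.factorial (k + m) : ℝ) = Real.exp l - P := by
      linarith
    -- S ≥ log(m+1) * (exp l - P)
    have htnonneg : ∀ k, 0 ≤ t k := by
      intro k
      have : (0:ℝ) ≤ Real.log ((k : ℝ) + 1) := Real.log_nonneg (by linarith [Nat.cast_nonneg (α := ℝ) k])
      have hfac : (0:ℝ) < (Nat.factorial k : ℝ) := by exact_mod_cast Nat.factorial_pos k
      positivity
    have hS1 : (∑' k : ℕ, t (k + m)) ≤ ∑' k, t k := by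
      have := Summable.sum_add_tsum_nat_add m hsum
      have hpart : 0 ≤ ∑ k ∈ Finset.range m, t k :=
        Finset.sum_nonneg fun k _ => htnonneg k
      linarith
    have hS2 : Real.log ((m : ℝ) + 1) * (Real.exp l - P) ≤ ∑' k : ℕ, t (k + m) := by
      rw [← htail_exp, ← tsum_mul_left]
      apply Summable.tsum_le_tsum
      · intro k
        have hfac : (0:ℝ) < (Nat.factorial (k + m) : ℝ) := by
          exact_mod_cast Nat.factorial_pos (k + m)
        have hmono : Real.log ((m : ℝ) + 1) ≤ Real.log (((k + m : ℕ) : ℝ) + 1) := by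
          apply Real.log_le_log (by positivity)
          push_cast; linarith [Nat.cast_nonneg (α := ℝ) k]
        have hpk : (0:ℝ) ≤ l ^ (k + m) / (Nat.factorial (k + m) : ℝ) := by positivity
        calc Real.log ((m : ℝ) + 1) * (l ^ (k + m) / (Nat.factorial (k + m) : ℝ))
            ≤ Real.log (((k + m : ℕ) : ℝ) + 1) * (l ^ (k + m) / (Nat.factorial (k + m) : ℝ)) :=
              mul_le_mul_of_nonneg_right hmono hpk
          _ = t (k + m) := by rw [ht_def]; ring
      · exact ((summable_nat_add_iff m).mpr (Real.summable_pow_div_factorial l)).mul_left _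
      · exact (summable_nat_add_iff m).mpr hsum
    have hSS : Real.log ((m : ℝ) + 1) * (Real.exp l - P) ≤ ∑' k, t k := hS2.trans hS1
    -- bound on exp(-l) * P
    have hP_bound : Real.exp (-l) * P ≤ l * Real.exp (-(c * l)) := by
      have hterm : ∀ k ∈ Finset.range m, l ^ k / (Nat.factorial k : ℝ)
          ≤ l ^ m / (Nat.factorial m : ℝ) :=
        fun k hk => aux_mono hl0.le m hml k (Finset.mem_range.mp hk).le
      have hPm : P ≤ (m : ℝ) * (l ^ m / (Nat.factorial m : ℝ)) := by
        calc P ≤ ∑ _k ∈ Finset.range m, l ^ m / (Nat.factorial m : ℝ) :=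
              Finset.sum_le_sum hterm
          _ = (m : ℝ) * (l ^ m / (Nat.factorial m : ℝ)) := by
              rw [Finset.sum_const, Finset.card_range, nsmul_eq_mul]
      have hfacm : (0:ℝ) < (Nat.factorial m : ℝ) := by exact_mod_cast Nat.factorial_pos m
      have hmm : (m : ℝ) ^ m / (Nat.factorial m : ℝ) ≤ Real.exp m :=
        Real.pow_div_factorial_le_exp (m:ℝ) (Nat.cast_nonneg m) m
      have hlm : l ^ m ≤ ((5:ℝ)/2) ^ m * (m : ℝ) ^ m := by
        rw [← mul_pow]
        exact pow_le_pow_left₀ hl0.le hm52 m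
      have hstep : l ^ m / (Nat.factorial m : ℝ) ≤ ((5:ℝ)/2) ^ m * Real.exp m := by
        calc l ^ m / (Nat.factorial m : ℝ)
            ≤ ((5:ℝ)/2) ^ m * (m : ℝ) ^ m / (Nat.factorial m : ℝ) := by
              gcongr
          _ = ((5:ℝ)/2) ^ m * ((m : ℝ) ^ m / (Nat.factorial m : ℝ)) := by ring
          _ ≤ ((5:ℝ)/2) ^ m * Real.exp m :=
              mul_le_mul_of_nonneg_left hmm (by positivity)
      have hexp52 : ((5:ℝ)/2) ^ m * Real.exp m = Real.exp ((m : ℝ) * (1 + Real.log (5/2))) := by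
        rw [← Real.exp_log (show (0:ℝ) < 5/2 by norm_num), ← Real.exp_nat_mul,
          ← Real.exp_add]
        rw [Real.log_exp]
        ring_nf
      have hexp_le : Real.exp ((m : ℝ) * (1 + Real.log (5/2)) + -l) ≤ Real.exp (-(c * l)) := by
        apply Real.exp_le_exp.mpr
        have hpos : (0:ℝ) < 1 + Real.log (5/2) := by
          have : (0:ℝ) < Real.log (5/2) := Real.log_pos (by norm_num)
          linarith
        have : (m : ℝ) * (1 + Real.log (5/2)) ≤ (l/2) * (1 + Real.log (5/2)) :=
          mul_le_mul_of_nonneg_right hm2 hpos.le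
        simp only [hc_def]
        linarith
      calc Real.exp (-l) * P
          ≤ Real.exp (-l) * ((m : ℝ) * (((5:ℝ)/2) ^ m * Real.exp m)) := by
            apply mul_le_mul_of_nonneg_left _ (Real.exp_nonneg _)
            calc P ≤ (m : ℝ) * (l ^ m / (Nat.factorial m : ℝ)) := hPm
              _ ≤ (m : ℝ) * (((5:ℝ)/2) ^ m * Real.exp m) :=
                  mul_le_mul_of_nonneg_left hstep hm0.le
        _ = (m : ℝ) * Real.exp ((m : ℝ) * (1 + Real.log (5/2)) + -l) := by
            rw [hexp52, Real.exp_add]; ring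
        _ ≤ l * Real.exp (-(c * l)) := by
            apply mul_le_mul hml hexp_le (Real.exp_nonneg _) hl0.le
    -- P ≤ exp l
    have hP_le_exp : P ≤ Real.exp l := by
      have htail_nonneg : 0 ≤ ∑' k : ℕ, l ^ (k + m) / (Nat.factorial (k + m) : ℝ) :=
        tsum_nonneg fun k => by positivity
      linarith
    -- final chain
    have hA : (1 - Real.log 2 / Real.log l) ≤ Real.log ((m : ℝ) + 1) / Real.log l := by
      have heq1 : 1 - Real.log 2 / Real.log l = (Real.log l - Real.log 2) / Real.log l := by
        field_simp
      rw [heq1]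
      apply (div_le_div_iff_of_pos_right hlog).mpr
      have h' : Real.log l - Real.log 2 = Real.log (l / 2) :=
        (Real.log_div hl0.ne' two_ne_zero).symm
      rw [h']
      exact Real.log_le_log (by linarith) (by linarith)
    have hA0 : (0:ℝ) ≤ 1 - Real.log 2 / Real.log l := by
      rw [sub_nonneg, div_le_one hlog]
      exact Real.log_le_log (by norm_num) (by linarith)
    have hB : 1 - l * Real.exp (-(c * l)) ≤ 1 - Real.exp (-l) * P := by
      linarith
    have hB0 : (0:ℝ) ≤ 1 - l * Real.exp (-(c * l)) := by linarith
    have hkey : Real.log ((m : ℝ) + 1) / Real.log l * (1 - Real.exp (-l) * P) ≤ u l := by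
      have h1 : Real.exp (-l) * Real.exp l = 1 := by
        rw [← Real.exp_add, neg_add_cancel, Real.exp_zero]
      have hrw : Real.log ((m : ℝ) + 1) / Real.log l * (1 - Real.exp (-l) * P)
          = Real.exp (-l) * (Real.log l)⁻¹ * (Real.log ((m : ℝ) + 1) * (Real.exp l - P)) := by
        rw [div_eq_mul_inv]
        linear_combination (-(Real.log ((m:ℝ) + 1) * (Real.log l)⁻¹)) * h1
      rw [hrw, hu_def]
      apply mul_le_mul_of_nonneg_left hSS
      positivity
    calc g l = (1 - Real.log 2 / Real.log l) * (1 - l * Real.exp (-(c * l))) := rfl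
      _ ≤ Real.log ((m : ℝ) + 1) / Real.log l * (1 - Real.exp (-l) * P) :=
          mul_le_mul hA hB hB0 (hA0.trans hA)
      _ ≤ u l := hkey
  -- upper bound: u is eventually ≤ 3
  have hub : ∀ᶠ l in atTop, u l ≤ 3 := by
    filter_upwards [eventually_ge_atTop (3:ℝ)] with l hl3
    have hl0 : (0:ℝ) < l := by linarith
    have hlog1 : (1:ℝ) ≤ Real.log l := by
      rw [Real.le_log_iff_exp_le hl0]
      have := Real.exp_one_lt_d9
      linarith
    have hlog : (0:ℝ) < Real.log l := by linarith
    have hs1 : Summable (fun k : ℕ => l ^ k / (Nat.factorial k : ℝ)) :=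
      Real.summable_pow_div_factorial l
    have hsk : Summable (fun k : ℕ => l ^ k * (k : ℝ) / (Nat.factorial k : ℝ)) :=
      aux_summable_k hl0.le
    have hsum : Summable (fun k : ℕ => l ^ k * Real.log ((k : ℝ) + 1) / (Nat.factorial k : ℝ)) :=
      aux_summable hl0.le
    set b : ℕ → ℝ := fun k =>
      Real.log l * (l ^ k / (Nat.factorial k : ℝ))
        + l⁻¹ * (l ^ k * (k : ℝ) / (Nat.factorial k : ℝ))
        + l⁻¹ * (l ^ k / (Nat.factorial k : ℝ)) with hb_def
    have hsb : Summable b :=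
      ((hs1.mul_left _).add (hsk.mul_left _)).add (hs1.mul_left _)
    have hle : ∀ k : ℕ, l ^ k * Real.log ((k : ℝ) + 1) / (Nat.factorial k : ℝ) ≤ b k := by
      intro k
      have hfac : (0:ℝ) < (Nat.factorial k : ℝ) := by exact_mod_cast Nat.factorial_pos k
      have hk1 : (0:ℝ) < (k : ℝ) + 1 := by positivity
      have hlogk : Real.log ((k : ℝ) + 1) ≤ Real.log l + ((k : ℝ) + 1) / l := by
        have h1 : Real.log (((k : ℝ) + 1) / l) ≤ ((k : ℝ) + 1) / l - 1 :=
          Real.log_le_sub_one_of_pos (by positivity)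
        have h2 : Real.log (((k : ℝ) + 1) / l) = Real.log ((k : ℝ) + 1) - Real.log l :=
          Real.log_div hk1.ne' hl0.ne'
        rw [h2] at h1
        linarith
      have hlk : (0:ℝ) ≤ l ^ k / (Nat.factorial k : ℝ) := by positivity
      have := mul_le_mul_of_nonneg_left hlogk hlk
      calc l ^ k * Real.log ((k : ℝ) + 1) / (Nat.factorial k : ℝ)
          = (l ^ k / (Nat.factorial k : ℝ)) * Real.log ((k : ℝ) + 1) := by ring
        _ ≤ (l ^ k / (Nat.factorial k : ℝ)) * (Real.log l + ((k : ℝ) + 1) / l) := this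
        _ = b k := by
            simp only [hb_def]
            field_simp
            ring
    have hSb : (∑' k : ℕ, l ^ k * Real.log ((k : ℝ) + 1) / (Nat.factorial k : ℝ))
        ≤ ∑' k, b k := Summable.tsum_le_tsum hle hsum hsb
    have hbval : ∑' k, b k = (Real.log l + 1 + l⁻¹) * Real.exp l := by
      have hexp_tsum : Real.exp l = ∑' k : ℕ, l ^ k / (Nat.factorial k : ℝ) := by
        rw [Real.exp_eq_exp_ℝ, NormedSpace.exp_eq_tsum_div]
      simp only [hb_def]
      rw [Summable.tsum_add ((hs1.mul_left _).add (hsk.mul_left _)) (hs1.mul_left _),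
        Summable.tsum_add (hs1.mul_left _) (hsk.mul_left _), tsum_mul_left, tsum_mul_left,
        tsum_mul_left, aux_U hl0.le, ← hexp_tsum]
      field_simp
    have hfinal : u l ≤ (Real.log l + 1 + l⁻¹) / Real.log l := by
      have h1 : Real.exp (-l) * Real.exp l = 1 := by
        rw [← Real.exp_add, neg_add_cancel, Real.exp_zero]
      have hq : (0:ℝ) ≤ Real.exp (-l) * (Real.log l)⁻¹ := by positivity
      calc u l ≤ Real.exp (-l) * (Real.log l)⁻¹ * ((Real.log l + 1 + l⁻¹) * Real.exp l) := by
            simp only [hu_def]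
            exact mul_le_mul_of_nonneg_left (hSb.trans hbval.le) hq
        _ = (Real.log l + 1 + l⁻¹) / Real.log l := by
            rw [div_eq_mul_inv]
            linear_combination ((Real.log l + 1 + l⁻¹) * (Real.log l)⁻¹) * h1
    refine hfinal.trans ?_
    rw [div_le_iff₀ hlog]
    have : l⁻¹ ≤ 1 := by
      rw [inv_le_one_iff₀]; right; linarith
    linarith
  -- conclude
  have hu_cobdd : IsCoboundedUnder (· ≥ ·) atTop u :=
    isCoboundedUnder_ge_of_eventually_le atTop hub
  have hg_bdd : IsBoundedUnder (· ≥ ·) atTop g := hg.isBoundedUnder_ge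
  calc (1:ℝ) = liminf g atTop := hg.liminf_eq.symm
    _ ≤ liminf u atTop := liminf_le_liminf hev hg_bdd hu_cobdd
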